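/- Let $Y:[0,\infty)\to\mathbb{R}$ be a càdlàg trajectory and $f\geq 0$ a continuous function. Set $t_0=\inf\{t\geq 0: f(Y_t)=0\}$ and $t_1=\inf\{t\geq 0: \int_0^t f(Y_u)^{-1}\,du=\infty\}$. If $t_0=t_1$, then the integral equation $\upsilon_t=\int_0^t f(Y_{\upsilon_s})\,ds$ has a unique solution, given by $\upsilon_t=\inf\{s\geq 0:\int_0^s f(Y_u)^{-1}\,du>t\}\wedge t_0$. -/

import Mathlib

open MeasureTheory Set Filter
open scoped ENNReal Topology

noncomputable section

/-- A solution (up to explosion) of the integral equation `υ_t = ∫_0^t f(Y_{υ_s}) ds`: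
a function nondecreasing on `[0,∞)` satisfying the equation for all `t` where the
right-hand side is finite. -/
def IsTimeChangeSolution (Y f : ℝ → ℝ) (υ : ℝ → ℝ≥0∞) : Prop :=
  (∀ s t : ℝ, 0 ≤ s → s ≤ t → υ s ≤ υ t) ∧
  ∀ t : ℝ, 0 ≤ t →
    (∫⁻ s in Set.Ioc (0:ℝ) t, ENNReal.ofReal (f (Y ((υ s).toReal)))) ≠ ∞ →
    υ t = ∫⁻ s in Set.Ioc (0:ℝ) t, ENNReal.ofReal (f (Y ((υ s).toReal)))

namespace TimeChangeAux

variable (Y f : ℝ → ℝ)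

/-- The integrand. -/
def G (u : ℝ) : ℝ≥0∞ := ENNReal.ofReal (f (Y u))

/-- The additive functional `A s = ∫_0^s f(Y_u)^{-1} du`. -/
def A (s : ℝ) : ℝ≥0∞ := ∫⁻ u in Set.Ioc (0:ℝ) s, (G Y f u)⁻¹

/-- The right inverse of `A`. -/
def C (t : ℝ) : ℝ≥0∞ :=
  ⨅ s : {s : ℝ // 0 ≤ s ∧ ENNReal.ofReal t < A Y f s}, ENNReal.ofReal s.1

variable {Y f}

lemma G_ne_top (u : ℝ) : G Y f u ≠ ∞ := ENNReal.ofReal_ne_top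

lemma Ginv_pos (u : ℝ) : 0 < (G Y f u)⁻¹ := ENNReal.inv_pos.2 (G_ne_top u)

/-- A càdlàg function is measurable. -/
lemma measurable_Y (hY_right : ∀ t : ℝ, Tendsto Y (nhdsWithin t (Set.Ici t)) (nhds (Y t))) :
    Measurable Y := by
  have happrox : ∀ n : ℕ, Measurable (fun t : ℝ => Y ((⌈t * 2^n⌉ : ℤ) / 2^n)) := by
    intro n
    exact (measurable_from_top (f := fun k : ℤ => Y (k / 2^n))).comp
      (Int.measurable_ceil.comp (measurable_id.mul_const _))
  refine measurable_of_tendsto_metrizable' atTop happrox ?_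
  rw [tendsto_pi_nhds]
  intro t
  have hmem : ∀ n : ℕ, ((⌈t * 2^n⌉ : ℤ) / 2^n : ℝ) ∈ Set.Ici t := by
    intro n
    have h1 : t * 2^n ≤ (⌈t * 2^n⌉ : ℝ) := Int.le_ceil _
    have h2 : (0:ℝ) < 2^n := by positivity
    simpa [Set.mem_Ici, div_le_iff₀ h2, le_div_iff₀ h2] using h1
  have htend : Tendsto (fun n : ℕ => ((⌈t * 2^n⌉ : ℤ) / 2^n : ℝ)) atTop (𝓝[≥] t) := by
    apply tendsto_nhdsWithin_of_tendsto_nhds_of_eventually_within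
    · have hub : ∀ n : ℕ, ((⌈t * 2^n⌉ : ℤ) / 2^n : ℝ) ≤ t + (1/2)^n := by
        intro n
        have h1 : (⌈t * 2^n⌉ : ℝ) ≤ t * 2^n + 1 := (Int.ceil_lt_add_one _).le
        have h2 : (0:ℝ) < 2^n := by positivity
        rw [div_le_iff₀ h2]
        have h3 : (1/2:ℝ)^n * 2^n = 1 := by rw [← mul_pow]; norm_num
        calc (⌈t * 2^n⌉ : ℝ) ≤ t * 2^n + 1 := h1
        _ = (t + (1/2)^n) * 2^n := by rw [add_mul, h3]
      have hlim : Tendsto (fun n : ℕ => t + (1/2:ℝ)^n) atTop (𝓝 t) := by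
        have := tendsto_pow_atTop_nhds_zero_of_lt_one (by norm_num : (0:ℝ) ≤ 1/2)
          (by norm_num : (1/2:ℝ) < 1)
        simpa using (tendsto_const_nhds (x := t)).add this
      exact tendsto_of_tendsto_of_tendsto_of_le_of_le tendsto_const_nhds hlim hmem hub
    · exact Eventually.of_forall hmem
  exact (hY_right t).comp htend

lemma measurable_G (hY_right : ∀ t : ℝ, Tendsto Y (nhdsWithin t (Set.Ici t)) (nhds (Y t)))
    (hf : Continuous f) : Measurable (G Y f) :=
  ENNReal.measurable_ofReal.comp (hf.measurable.comp (measurable_Y hY_right))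

/-- The density measure. -/
def mu' (Y f : ℝ → ℝ) : Measure ℝ := volume.withDensity (fun u => (G Y f u)⁻¹)

lemma A_eq_mu' (s : ℝ) : A Y f s = mu' Y f (Ioc 0 s) :=
  (withDensity_apply _ measurableSet_Ioc).symm

lemma mu'_pos {E : Set ℝ} (hY_right : ∀ t : ℝ, Tendsto Y (nhdsWithin t (Set.Ici t)) (nhds (Y t)))
    (hf : Continuous f) (hE : MeasurableSet E) (hvol : 0 < volume E) : 0 < mu' Y f E := by
  rw [mu', withDensity_apply _ hE]
  rw [lintegral_pos_iff_support (f := fun u => (G Y f u)⁻¹) ((measurable_G hY_right hf).inv)]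
  have : Function.support (fun u => (G Y f u)⁻¹) = Set.univ := by
    ext u; simp [Function.support, G_ne_top u]
  rw [this]
  rwa [Measure.restrict_apply_univ]

lemma A_mono : Monotone (A Y f) := by
  intro s s' h
  exact lintegral_mono_set (Ioc_subset_Ioc le_rfl h)

lemma A_nonpos {s : ℝ} (h : s ≤ 0) : A Y f s = 0 := by
  rw [A, Ioc_eq_empty (by linarith), Measure.restrict_empty, lintegral_zero_measure]


lemma A_add (hY_right : ∀ t : ℝ, Tendsto Y (nhdsWithin t (Set.Ici t)) (nhds (Y t)))
    (hf : Continuous f) {s s' : ℝ} (hs : 0 ≤ s) (hss : s ≤ s') :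
    A Y f s' = A Y f s + mu' Y f (Ioc s s') := by
  rw [A_eq_mu', A_eq_mu', ← measure_union ((Set.Ioc_disjoint_Ioc_of_le le_rfl)) measurableSet_Ioc,
    Set.Ioc_union_Ioc_eq_Ioc hs hss]

lemma A_strict (hY_right : ∀ t : ℝ, Tendsto Y (nhdsWithin t (Set.Ici t)) (nhds (Y t)))
    (hf : Continuous f) {s s' : ℝ} (hs : 0 ≤ s) (hss : s < s') (hfin : A Y f s ≠ ∞) :
    A Y f s < A Y f s' := by
  rw [A_add hY_right hf hs hss.le]
  refine ENNReal.lt_add_right hfin ?_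
  refine (mu'_pos hY_right hf measurableSet_Ioc ?_).ne'
  rw [Real.volume_Ioc]
  simp [ENNReal.ofReal_pos, hss]

lemma A_pos (hY_right : ∀ t : ℝ, Tendsto Y (nhdsWithin t (Set.Ici t)) (nhds (Y t)))
    (hf : Continuous f) {s : ℝ} (hs : 0 < s) : 0 < A Y f s := by
  rw [A_eq_mu']
  refine mu'_pos hY_right hf measurableSet_Ioc ?_
  rw [Real.volume_Ioc]
  simp [ENNReal.ofReal_pos, hs]

lemma mu'_singleton (b : ℝ) : mu' Y f {b} = 0 := by
  rw [mu', withDensity_apply _ (measurableSet_singleton b),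
    Measure.restrict_eq_zero.2 (Real.volume_singleton), lintegral_zero_measure]

/-- Left continuity of `A`. -/
lemma A_left {b : ℝ} (hb : 0 < b) {x : ℝ≥0∞}
    (h : ∀ y, 0 ≤ y → y < b → A Y f y ≤ x) : A Y f b ≤ x := by
  have hmono : ∀ i j : ℕ, i ≤ j → b - b/(i+2) ≤ b - b/(j+2) := by
    intro i j hij
    have h2 : b/(j+2) ≤ b/(i+2) := by
      refine div_le_div_of_nonneg_left hb.le (by positivity) ?_
      have : (i:ℝ) ≤ j := Nat.cast_le.2 hij
      linarith
    linarith
  have hIoo : Ioo (0:ℝ) b = ⋃ n : ℕ, Ioc 0 (b - b/(n+2)) := by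
    ext z
    simp only [mem_Ioo, mem_iUnion, mem_Ioc]
    constructor
    · rintro ⟨hz0, hzb⟩
      obtain ⟨n, hn⟩ := exists_nat_one_div_lt (div_pos (show (0:ℝ) < b - z by linarith) hb)
      refine ⟨n, hz0, ?_⟩
      have h3 : b * (1/(n+1)) < b * ((b - z)/b) := by
        exact mul_lt_mul_of_pos_left hn hb
      rw [mul_div_cancel₀ _ hb.ne'] at h3
      have h4 : b/((n:ℝ)+2) ≤ b/((n:ℝ)+1) := by
        refine div_le_div_of_nonneg_left hb.le (by positivity) (by linarith)
      rw [mul_one_div] at h3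
      linarith
    · rintro ⟨n, hz0, hzn⟩
      have : b/(n+2) > 0 := by positivity
      exact ⟨hz0, by linarith⟩
  have hAb : A Y f b = mu' Y f (Ioo 0 b) := by
    rw [A_eq_mu', ← Set.Ioo_union_right hb]
    refine le_antisymm ?_ (measure_mono subset_union_left)
    refine (measure_union_le _ _).trans ?_
    rw [mu'_singleton, add_zero]
  rw [hAb, hIoo, Directed.measure_iUnion ?_]
  · refine iSup_le fun n => ?_
    rcases le_or_gt (b - b/(n+2)) 0 with hy | hy
    · rw [← A_eq_mu', A_nonpos hy]; exact zero_le
    · rw [← A_eq_mu']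
      refine h _ hy.le ?_
      have : b/(n+2) > 0 := by positivity
      linarith
  · exact Monotone.directed_le fun i j hij => Ioc_subset_Ioc le_rfl (hmono i j hij)

/-- Right continuity of `A`, given finiteness nearby. -/
lemma A_right {b : ℝ} (hb : 0 ≤ b) (hfin : ∃ u, b < u ∧ A Y f u ≠ ∞) {x : ℝ≥0∞}
    (h : ∀ u, b < u → x ≤ A Y f u) : x ≤ A Y f b := by
  have hIoc : Ioc (0:ℝ) b = ⋂ n : ℕ, Ioc 0 (b + 1/(n+1)) := by
    ext z
    simp only [mem_Ioc, mem_iInter]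
    constructor
    · rintro ⟨hz0, hzb⟩ n
      have : (0:ℝ) < 1/(n+1) := by positivity
      exact ⟨hz0, by linarith⟩
    · intro hz
      refine ⟨(hz 0).1, ?_⟩
      by_contra hzb
      push_neg at hzb
      obtain ⟨n, hn⟩ := exists_nat_one_div_lt (show (0:ℝ) < z - b by linarith)
      linarith [(hz n).2]
  have key : A Y f b = ⨅ n : ℕ, A Y f (b + 1/(n+1)) := by
    rw [A_eq_mu', hIoc, Directed.measure_iInter ?_ ?_ ?_]
    · simp only [← A_eq_mu']
    · exact fun n => measurableSet_Ioc.nullMeasurableSet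
    · intro i j
      refine ⟨max i j, Ioc_subset_Ioc le_rfl ?_, Ioc_subset_Ioc le_rfl ?_⟩
      · have : (1:ℝ)/(max i j+1) ≤ 1/(i+1) := by
          apply one_div_le_one_div_of_le (by positivity)
          have : (i:ℝ) ≤ max i j := Nat.cast_le.2 (le_max_left i j)
          linarith
        linarith
      · have : (1:ℝ)/(max i j+1) ≤ 1/(j+1) := by
          apply one_div_le_one_div_of_le (by positivity)
          have : (j:ℝ) ≤ max i j := Nat.cast_le.2 (le_max_right i j)
          linarith
        linarith
    · obtain ⟨u, hu, hfin⟩ := hfin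
      obtain ⟨n, hn⟩ := exists_nat_one_div_lt (show (0:ℝ) < u - b by linarith)
      refine ⟨n, ?_⟩
      rw [← A_eq_mu']
      exact fun htop => hfin (top_le_iff.1 (htop ▸ A_mono (by linarith)))
  rw [key]
  refine le_iInf fun n => h _ ?_
  have : (0:ℝ) < 1/(n+1) := by positivity
  linarith

/-- helper : `x ≤ ofReal u` for all `u > y ≥ 0` implies `x ≤ ofReal y`. -/
lemma le_ofReal_of_forall {x : ℝ≥0∞} {y : ℝ} (hy : 0 ≤ y)
    (h : ∀ u, y < u → x ≤ ENNReal.ofReal u) : x ≤ ENNReal.ofReal y := by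
  have htend : Tendsto (fun n : ℕ => ENNReal.ofReal (y + 1/(n+1))) atTop
      (𝓝 (ENNReal.ofReal y)) := by
    refine (ENNReal.continuous_ofReal.tendsto y).comp ?_
    have := tendsto_one_div_add_atTop_nhds_zero_nat (𝕜 := ℝ)
    simpa using (tendsto_const_nhds (x := y)).add this
  refine ge_of_tendsto' htend fun n => h _ ?_
  have : (0:ℝ) < 1/(n+1) := by positivity
  linarith


section Inverse

variable (Y f)

/-- The candidate solution (before capping at `t0`). -/
def tau (t0 : ℝ≥0∞) (t : ℝ) : ℝ≥0∞ := min (C Y f t) t0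

variable {Y f}

lemma C_le {t s : ℝ} (hs : 0 ≤ s) (h : ENNReal.ofReal t < A Y f s) :
    C Y f t ≤ ENNReal.ofReal s := iInf_le _ (⟨s, hs, h⟩ : {s : ℝ // 0 ≤ s ∧ ENNReal.ofReal t < A Y f s})

lemma le_C {t s : ℝ} (hs : 0 ≤ s) (h : ENNReal.ofReal s < C Y f t) :
    A Y f s ≤ ENNReal.ofReal t := by
  by_contra hc
  exact absurd (C_le hs (lt_of_not_ge hc)) (not_le.2 h)

lemma C_witness {t : ℝ} {x : ℝ≥0∞} (h : C Y f t < x) :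
    ∃ s : ℝ, 0 ≤ s ∧ ENNReal.ofReal t < A Y f s ∧ ENNReal.ofReal s < x := by
  obtain ⟨⟨s, hs0, hsA⟩, hlt⟩ := iInf_lt_iff.1 h
  exact ⟨s, hs0, hsA, hlt⟩

lemma C_mono : Monotone (C Y f) := by
  intro t t' h
  refine le_iInf fun ⟨s, hs0, hsA⟩ => ?_
  exact C_le hs0 (lt_of_le_of_lt (ENNReal.ofReal_le_ofReal h) hsA)

lemma tau_mono {t0 : ℝ≥0∞} : Monotone (tau Y f t0) :=
  fun _ _ h => min_le_min (C_mono h) le_rfl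

lemma tau_measurable {t0 : ℝ≥0∞} : Measurable (tau Y f t0) :=
  tau_mono.measurable

lemma tau_le_t0 {t0 : ℝ≥0∞} (t : ℝ) : tau Y f t0 t ≤ t0 := min_le_right _ _

lemma tau_le_C {t0 : ℝ≥0∞} (t : ℝ) : tau Y f t0 t ≤ C Y f t := min_le_left _ _

lemma C_nonpos (hY_right : ∀ t : ℝ, Tendsto Y (nhdsWithin t (Set.Ici t)) (nhds (Y t)))
    (hf : Continuous f) {t : ℝ} (ht : t ≤ 0) : C Y f t = 0 := by
  have h0 : ∀ u : ℝ, 0 < u → C Y f t ≤ ENNReal.ofReal u := by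
    intro u hu
    refine C_le hu.le ?_
    rw [ENNReal.ofReal_eq_zero.2 ht]
    exact A_pos hY_right hf hu
  have := le_ofReal_of_forall le_rfl (fun u hu => h0 u hu)
  simpa using this

lemma tau_nonpos (hY_right : ∀ t : ℝ, Tendsto Y (nhdsWithin t (Set.Ici t)) (nhds (Y t)))
    (hf : Continuous f) {t0 : ℝ≥0∞} {t : ℝ} (ht : t ≤ 0) : tau Y f t0 t = 0 := by
  rw [tau, C_nonpos hY_right hf ht]
  simp

end Inverse

section Tzero

variable {t0 t1 : ℝ≥0∞}

lemma G_eq_zero_iff (hf0 : ∀ x, 0 ≤ f x) {u : ℝ} : G Y f u = 0 ↔ f (Y u) = 0 := by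
  rw [G, ENNReal.ofReal_eq_zero]
  exact ⟨fun h => le_antisymm h (hf0 _), fun h => h.le⟩

lemma G_pos (hf0 : ∀ x, 0 ≤ f x)
    (ht0 : t0 = ⨅ t : {t : ℝ // 0 ≤ t ∧ f (Y t) = 0}, ENNReal.ofReal t.1)
    {u : ℝ} (hu : 0 ≤ u) (hlt : ENNReal.ofReal u < t0) : G Y f u ≠ 0 := by
  intro h
  rw [G_eq_zero_iff hf0] at h
  have : t0 ≤ ENNReal.ofReal u := ht0 ▸ iInf_le _ (⟨u, hu, h⟩ : {t : ℝ // 0 ≤ t ∧ f (Y t) = 0})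
  exact absurd hlt (not_lt.2 this)

lemma t0_attained (hY_right : ∀ t : ℝ, Tendsto Y (nhdsWithin t (Set.Ici t)) (nhds (Y t)))
    (hf : Continuous f) (hf0 : ∀ x, 0 ≤ f x)
    (ht0 : t0 = ⨅ t : {t : ℝ // 0 ≤ t ∧ f (Y t) = 0}, ENNReal.ofReal t.1)
    (htop : t0 ≠ ∞) : G Y f t0.toReal = 0 := by
  set b := t0.toReal with hb
  have hb0 : 0 ≤ b := ENNReal.toReal_nonneg
  have hofb : ENNReal.ofReal b = t0 := ENNReal.ofReal_toReal htop
  have hz : ∀ n : ℕ, ∃ z : ℝ, 0 ≤ z ∧ f (Y z) = 0 ∧ b ≤ z ∧ z < b + 1/(n+1) := by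
    intro n
    have h1 : t0 < ENNReal.ofReal (b + 1/(n+1)) := by
      rw [← hofb]
      refine ENNReal.ofReal_lt_ofReal_iff (by positivity) |>.2 ?_
      have : (0:ℝ) < 1/(n+1) := by positivity
      linarith
    rw [ht0] at h1
    obtain ⟨⟨z, hz0, hzf⟩, hlt⟩ := iInf_lt_iff.1 h1
    refine ⟨z, hz0, hzf, ?_, ?_⟩
    · have h2 : t0 ≤ ENNReal.ofReal z := ht0 ▸ iInf_le _ (⟨z, hz0, hzf⟩ : {t : ℝ // 0 ≤ t ∧ f (Y t) = 0})
      rw [← hofb] at h2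
      exact (ENNReal.ofReal_le_ofReal_iff hz0).1 h2
    · exact (ENNReal.ofReal_lt_ofReal_iff_of_nonneg hz0).1 hlt
  choose z hz0 hzf hzb hzlt using hz
  have htend : Tendsto z atTop (𝓝[≥] b) := by
    apply tendsto_nhdsWithin_of_tendsto_nhds_of_eventually_within
    · have hlim : Tendsto (fun n : ℕ => b + 1/((n:ℝ)+1)) atTop (𝓝 b) := by
        have := tendsto_one_div_add_atTop_nhds_zero_nat (𝕜 := ℝ)
        simpa using (tendsto_const_nhds (x := b)).add this
      exact tendsto_of_tendsto_of_tendsto_of_le_of_le tendsto_const_nhds hlim hzb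
        (fun n => (hzlt n).le)
    · exact Eventually.of_forall hzb
  have hcomp : Tendsto (fun n => f (Y (z n))) atTop (𝓝 (f (Y b))) :=
    ((hf.tendsto _).comp (hY_right b)).comp htend
  have : f (Y b) = 0 := by
    have h2 : Tendsto (fun _ : ℕ => (0:ℝ)) atTop (𝓝 (f (Y b))) := by
      simpa [hzf] using hcomp
    exact (tendsto_nhds_unique h2 tendsto_const_nhds)
  rw [G_eq_zero_iff hf0]
  exact this

lemma A_ne_top_of_lt_t1
    (ht1 : t1 = ⨅ t : {t : ℝ // 0 ≤ t ∧ A Y f t = ∞}, ENNReal.ofReal t.1)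
    {s : ℝ} (hs : 0 ≤ s) (h : ENNReal.ofReal s < t1) : A Y f s ≠ ∞ := by
  intro htop
  have : t1 ≤ ENNReal.ofReal s := ht1 ▸ iInf_le _ (⟨s, hs, htop⟩ : {t : ℝ // 0 ≤ t ∧ A Y f t = ∞})
  exact absurd h (not_lt.2 this)

lemma A_eq_top_of_t1_lt
    (ht1 : t1 = ⨅ t : {t : ℝ // 0 ≤ t ∧ A Y f t = ∞}, ENNReal.ofReal t.1)
    {s : ℝ} (h : t1 < ENNReal.ofReal s) : A Y f s = ∞ := by
  rw [ht1] at h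
  obtain ⟨⟨u, hu0, hAu⟩, hlt⟩ := iInf_lt_iff.1 h
  have huslt : u < s := (ENNReal.ofReal_lt_ofReal_iff_of_nonneg hu0).1 hlt
  exact top_le_iff.1 (hAu ▸ A_mono huslt.le)

end Tzero


/-- A càdlàg composition is bounded on compact intervals. -/
lemma G_bounded (hY_right : ∀ t : ℝ, Tendsto Y (nhdsWithin t (Set.Ici t)) (nhds (Y t)))
    (hY_left : ∀ t : ℝ, ∃ l : ℝ, Tendsto Y (nhdsWithin t (Set.Iio t)) (nhds l))
    (hf : Continuous f) (M : ℝ) :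
    ∃ cb : ℝ≥0∞, cb ≠ ∞ ∧ ∀ u, 0 ≤ u → u ≤ M → G Y f u ≤ cb := by
  have hU : ∀ x : ℝ, ∃ K : ℝ, {u : ℝ | f (Y u) ≤ K} ∈ 𝓝 x := by
    intro x
    obtain ⟨l, hl⟩ := hY_left x
    refine ⟨max (f (Y x)) (f l) + 1, ?_⟩
    have h1 : {u : ℝ | f (Y u) ≤ max (f (Y x)) (f l) + 1} ∈ nhdsWithin x (Set.Ici x) := by
      have := ((hf.tendsto (Y x)).comp (hY_right x)).eventually
        (eventually_le_nhds (show f (Y x) < max (f (Y x)) (f l) + 1 by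
          have := le_max_left (f (Y x)) (f l); linarith))
      exact this
    have h2 : {u : ℝ | f (Y u) ≤ max (f (Y x)) (f l) + 1} ∈ nhdsWithin x (Set.Iio x) := by
      have := ((hf.tendsto l).comp hl).eventually
        (eventually_le_nhds (show f l < max (f (Y x)) (f l) + 1 by
          have := le_max_right (f (Y x)) (f l); linarith))
      exact this
    rw [← nhdsLT_sup_nhdsGE x]
    exact mem_sup.2 ⟨h2, h1⟩
  choose K hK using hU
  obtain ⟨t, -, hcover⟩ := (isCompact_Icc (a := (0:ℝ)) (b := M)).elim_nhds_subcover
    (fun x => {u : ℝ | f (Y u) ≤ K x}) (fun x _ => hK x)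
  refine ⟨t.sup (fun x => ENNReal.ofReal (K x)), ?_, ?_⟩
  · rw [← lt_top_iff_ne_top]
    refine Finset.sup_lt_iff (by simp) |>.2 fun x _ => ?_
    exact ENNReal.ofReal_lt_top
  · intro u hu0 huM
    obtain ⟨x, hxt, hxu⟩ := by
      have := hcover ⟨hu0, huM⟩
      simpa using this
    calc G Y f u ≤ ENNReal.ofReal (K x) := ENNReal.ofReal_le_ofReal hxu
    _ ≤ _ := Finset.le_sup (f := fun x => ENNReal.ofReal (K x)) hxt


lemma A_sup0 (x : ℝ) : A Y f (max x 0) = A Y f x := by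
  rcases le_total x 0 with h | h
  · rw [max_eq_right h, A_nonpos le_rfl, A_nonpos h]
  · rw [max_eq_left h]

lemma mu'_Ioc (hY_right : ∀ t : ℝ, Tendsto Y (nhdsWithin t (Set.Ici t)) (nhds (Y t)))
    (hf : Continuous f) {u v : ℝ} (hu : 0 ≤ u) (hAu : A Y f u ≠ ∞) :
    mu' Y f (Ioc u v) = A Y f v - A Y f u := by
  rcases le_total u v with h | h
  · have := A_add hY_right hf hu h
    rw [this, ENNReal.add_sub_cancel_left hAu]
  · rw [Ioc_eq_empty (not_lt.2 h), measure_empty, eq_comm, tsub_eq_zero_iff_le]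
    exact A_mono h

lemma exists_finite_beyond {t1 : ℝ≥0∞}
    (ht1 : t1 = ⨅ t : {t : ℝ // 0 ≤ t ∧ A Y f t = ∞}, ENNReal.ofReal t.1)
    {y : ℝ} (hy : 0 ≤ y) (hlt : ENNReal.ofReal y < t1) : ∃ u, y < u ∧ A Y f u ≠ ∞ := by
  rcases eq_or_ne t1 ∞ with htop | htop
  · exact ⟨y + 1, by linarith, A_ne_top_of_lt_t1 ht1 (by linarith)
      (htop ▸ ENNReal.ofReal_lt_top)⟩
  · have hyt : y < t1.toReal := by
      rw [← ENNReal.ofReal_toReal htop] at hlt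
      exact (ENNReal.ofReal_lt_ofReal_iff_of_nonneg hy).1 hlt
    refine ⟨(y + t1.toReal)/2, by linarith, A_ne_top_of_lt_t1 ht1 (by linarith) ?_⟩
    have h2 : ENNReal.ofReal ((y + t1.toReal)/2) < ENNReal.ofReal (t1.toReal) := by
      refine (ENNReal.ofReal_lt_ofReal_iff (lt_of_le_of_lt hy hyt)).2 (by linarith)
    rwa [ENNReal.ofReal_toReal htop] at h2

section MainLemma

variable {t0 t1 : ℝ≥0∞}
variable (hY_right : ∀ t : ℝ, Tendsto Y (nhdsWithin t (Set.Ici t)) (nhds (Y t)))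
  (hY_left : ∀ t : ℝ, ∃ l : ℝ, Tendsto Y (nhdsWithin t (Set.Iio t)) (nhds l))
  (hf : Continuous f) (hf0 : ∀ x, 0 ≤ f x)
  (ht0 : t0 = ⨅ t : {t : ℝ // 0 ≤ t ∧ f (Y t) = 0}, ENNReal.ofReal t.1)
  (ht1 : t1 = ⨅ t : {t : ℝ // 0 ≤ t ∧ A Y f t = ∞}, ENNReal.ofReal t.1)
  (heq : t0 = t1)

include hY_right hf hf0 ht0 ht1 heq in
/-- Core identity: the candidate solves the equation wherever it is finite. -/
lemma tau_eq_lintegral {t : ℝ} (ht : 0 ≤ t) (hfin : tau Y f t0 t ≠ ∞) :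
    tau Y f t0 t = ∫⁻ s in Set.Ioc (0:ℝ) t, G Y f ((tau Y f t0 s).toReal) := by
  have hGmeas := measurable_G hY_right hf
  set τ := tau Y f t0 with hτ
  set b := (τ t).toReal with hbdef
  have hb0 : 0 ≤ b := ENNReal.toReal_nonneg
  have hτt : τ t = ENNReal.ofReal b := (ENNReal.ofReal_toReal hfin).symm
  have hbt0 : ENNReal.ofReal b ≤ t0 := hτt ▸ tau_le_t0 t
  have hbC : ENNReal.ofReal b ≤ C Y f t := hτt ▸ tau_le_C t
  have hAy_le : ∀ y, 0 ≤ y → y < b → A Y f y ≤ ENNReal.ofReal t := by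
    intro y hy0 hyb
    refine le_C hy0 (lt_of_lt_of_le ?_ hbC)
    exact (ENNReal.ofReal_lt_ofReal_iff (lt_of_le_of_lt hy0 hyb)).2 hyb
  have hAb_le : A Y f b ≤ ENNReal.ofReal t := by
    rcases eq_or_lt_of_le hb0 with h0 | hb0'
    · rw [A_nonpos (le_of_eq h0.symm)]; exact zero_le
    · exact A_left hb0' hAy_le
  have hAb_ne : A Y f b ≠ ∞ := fun h => by
    rw [h] at hAb_le
    exact ENNReal.ofReal_ne_top (top_le_iff.1 hAb_le)
  have hGpos : ∀ u, 0 ≤ u → u < b → G Y f u ≠ 0 := fun u hu0 hub =>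
    G_pos hf0 ht0 hu0 (lt_of_lt_of_le ((ENNReal.ofReal_lt_ofReal_iff
      (lt_of_le_of_lt hu0 hub)).2 hub) hbt0)
  -- dirac coefficient : `A b < t → G b = 0`
  have hdirac : A Y f b < ENNReal.ofReal t → G Y f b = 0 := by
    intro hAb
    rcases le_or_gt t0 (C Y f t) with hcase | hcase
    · have ht0b : t0 = ENNReal.ofReal b := by rw [← hτt, hτ, tau, min_eq_right hcase]
      have ht0top : t0 ≠ ∞ := by rw [ht0b]; exact ENNReal.ofReal_ne_top
      have hbb : t0.toReal = b := by rw [ht0b]; exact ENNReal.toReal_ofReal hb0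
      rw [← hbb]; exact t0_attained hY_right hf hf0 ht0 ht0top
    · exfalso
      have hCb : C Y f t = ENNReal.ofReal b := by rw [← hτt, hτ, tau, min_eq_left hcase.le]
      have h1 : ∀ u, b < u → ENNReal.ofReal t < A Y f u := by
        intro u hu
        have hClt : C Y f t < ENNReal.ofReal u := by
          rw [hCb]; exact (ENNReal.ofReal_lt_ofReal_iff (lt_of_le_of_lt hb0 hu)).2 hu
        obtain ⟨w, hw0, hwA, hwu⟩ := C_witness hClt
        have hwu' : w < u := (ENNReal.ofReal_lt_ofReal_iff_of_nonneg hw0).1 hwu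
        exact lt_of_lt_of_le hwA (A_mono hwu'.le)
      have h2 : ∀ u, b < u → A Y f u = ∞ := by
        intro u hu
        by_contra h2c
        have := A_right hb0 ⟨u, hu, h2c⟩ (x := ENNReal.ofReal t) (fun v hv => (h1 v hv).le)
        exact absurd (lt_of_le_of_lt this hAb) (lt_irrefl _)
      have h3 : t1 ≤ ENNReal.ofReal b := by
        refine le_ofReal_of_forall hb0 fun u hu => ?_
        exact ht1 ▸ iInf_le _ (⟨u, by linarith, h2 u hu⟩ : {t : ℝ // 0 ≤ t ∧ A Y f t = ∞})
      rw [← heq] at h3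
      have : t0 < t0 := lt_of_le_of_lt (h3.trans hCb.symm.le) hcase
      exact lt_irrefl _ this
  -- the cumulative function `m`
  set m : ℝ → ℝ := fun y => if b ≤ y then t else (A Y f y).toReal with hm
  have hAm : ∀ y, y < b → A Y f y ≠ ∞ := fun y hy h =>
    hAb_ne (top_le_iff.1 (h ▸ A_mono hy.le))
  have hm_nonneg : ∀ y, 0 ≤ m y := by
    intro y; rw [hm]; dsimp only; split
    · exact ht
    · exact ENNReal.toReal_nonneg
  have hAyt : ∀ y, y < b → A Y f y ≤ ENNReal.ofReal t := by
    intro y hy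
    rcases le_or_gt 0 y with h | h
    · exact hAy_le y h hy
    · rw [A_nonpos h.le]; exact zero_le
  have hm_le_t : ∀ y, m y ≤ t := by
    intro y; rw [hm]; dsimp only; split
    · exact le_rfl
    · next hc => exact ENNReal.toReal_le_of_le_ofReal ht (hAyt y (not_le.1 hc))
  have hm_mono : Monotone m := by
    intro y y' hyy
    rw [hm]; dsimp only
    rcases le_or_gt b y with h1 | h1
    · rw [if_pos h1, if_pos (le_trans h1 hyy)]
    · rcases le_or_gt b y' with h2 | h2
      · rw [if_neg (not_le.2 h1), if_pos h2]
        exact ENNReal.toReal_le_of_le_ofReal ht (hAyt y h1)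
      · rw [if_neg (not_le.2 h1), if_neg (not_le.2 h2)]
        exact ENNReal.toReal_mono (hAm _ h2) (A_mono hyy)
  have hFm : ∀ y, ENNReal.ofReal (m y) = (if b ≤ y then ENNReal.ofReal t else A Y f y) := by
    intro y; rw [hm]; dsimp only; split
    · rfl
    · next hc => exact ENNReal.ofReal_toReal (hAm y (not_le.1 hc))
  -- the key set identity
  have hKS : ∀ y : ℝ, {s : ℝ | s ∈ Ioc 0 t ∧ (τ s).toReal ≤ y} = Ioc 0 (m y) := by
    intro y
    rcases le_or_gt b y with hby | hyb
    · rw [show m y = t from if_pos hby]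
      ext s; simp only [mem_setOf_eq, mem_Ioc]
      constructor
      · rintro ⟨hs, -⟩; exact hs
      · intro hs
        refine ⟨hs, ?_⟩
        calc (τ s).toReal ≤ (τ t).toReal := ENNReal.toReal_mono hfin (tau_mono hs.2)
        _ = b := rfl
        _ ≤ y := hby
    · have hmy : m y = (A Y f y).toReal := if_neg (not_le.2 hyb)
      rcases lt_or_ge y 0 with hy0 | hy0
      · rw [hmy, A_nonpos hy0.le]
        ext s; simp only [mem_setOf_eq, mem_Ioc, ENNReal.toReal_zero]
        constructor
        · rintro ⟨hs, hτs⟩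
          exact absurd (le_trans ENNReal.toReal_nonneg hτs) (not_le.2 hy0)
        · rintro ⟨hs1, hs2⟩
          exact absurd (lt_of_lt_of_le hs1 hs2) (lt_irrefl _)
      · have hAy_ne : A Y f y ≠ ∞ := hAm y hyb
        have hofb : 0 < b := lt_of_le_of_lt hy0 hyb
        have hylt0 : ENNReal.ofReal y < t0 :=
          lt_of_lt_of_le ((ENNReal.ofReal_lt_ofReal_iff hofb).2 hyb) hbt0
        rw [hmy]; ext s
        simp only [mem_setOf_eq, mem_Ioc]
        constructor
        · rintro ⟨⟨hs0, hst⟩, hτs⟩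
          refine ⟨hs0, ?_⟩
          have hτs' : τ s ≤ ENNReal.ofReal y := by
            have hne : τ s ≠ ∞ := fun h =>
              hfin (top_le_iff.1 (h ▸ tau_mono hst))
            rw [← ENNReal.ofReal_toReal hne]
            exact ENNReal.ofReal_le_ofReal hτs
          have hCs : C Y f s ≤ ENNReal.ofReal y := by
            rcases le_or_gt (C Y f s) t0 with h | h
            · rw [hτ, tau, min_eq_left h] at hτs'; exact hτs'
            · rw [hτ, tau, min_eq_right h.le] at hτs'
              exact absurd (lt_of_le_of_lt hτs' hylt0) (lt_irrefl _)
          by_contra hc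
          push_neg at hc
          have hAys : A Y f y < ENNReal.ofReal s := by
            rw [← ENNReal.ofReal_toReal hAy_ne]
            exact (ENNReal.ofReal_lt_ofReal_iff hs0).2 hc
          have hcontra : ¬ ∀ u, y < u → ENNReal.ofReal s ≤ A Y f u := by
            intro hall
            exact absurd (A_right hy0 (exists_finite_beyond ht1 hy0 (heq ▸ hylt0)) hall)
              (not_le.2 hAys)
          push_neg at hcontra
          obtain ⟨u, hyu, hAu⟩ := hcontra
          have hClt : C Y f s < ENNReal.ofReal u :=
            lt_of_le_of_lt hCs ((ENNReal.ofReal_lt_ofReal_iff (lt_of_le_of_lt hy0 hyu)).2 hyu)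
          obtain ⟨w, hw0, hwA, hwu⟩ := C_witness hClt
          have hwu' : w < u := (ENNReal.ofReal_lt_ofReal_iff_of_nonneg hw0).1 hwu
          exact absurd (lt_trans (lt_of_lt_of_le hwA (A_mono hwu'.le)) hAu) (lt_irrefl _)
        · rintro ⟨hs0, hsA⟩
          have hst : s ≤ t :=
            le_trans hsA (ENNReal.toReal_le_of_le_ofReal ht (hAyt y hyb))
          refine ⟨⟨hs0, hst⟩, ?_⟩
          have hofs_le : ENNReal.ofReal s ≤ A Y f y := by
            rw [← ENNReal.ofReal_toReal hAy_ne]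
            exact ENNReal.ofReal_le_ofReal hsA
          have hCle : C Y f s ≤ ENNReal.ofReal y := by
            rcases lt_or_eq_of_le hofs_le with hlt | heqq
            · exact C_le hy0 hlt
            · refine le_ofReal_of_forall hy0 fun u hu => ?_
              refine C_le (by linarith) ?_
              rw [heqq]
              exact A_strict hY_right hf hy0 hu hAy_ne
          have hτy : τ s ≤ ENNReal.ofReal y := le_trans (tau_le_C s) hCle
          calc (τ s).toReal ≤ (ENNReal.ofReal y).toReal :=
            ENNReal.toReal_mono ENNReal.ofReal_ne_top hτy
          _ = y := ENNReal.toReal_ofReal hy0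
  -- the pushforward measure
  set T : ℝ → ℝ := fun s => (τ s).toReal with hT
  have hTmeas : Measurable T := ENNReal.measurable_toReal.comp tau_measurable
  set μ := Measure.map T (volume.restrict (Ioc 0 t)) with hμ
  have hμIoc : ∀ x y : ℝ, x ≤ y →
      μ (Ioc x y) = ENNReal.ofReal (m y) - ENNReal.ofReal (m x) := by
    intro x y hxy
    rw [hμ, Measure.map_apply hTmeas measurableSet_Ioc,
      Measure.restrict_apply (hTmeas measurableSet_Ioc)]
    have hsets : T ⁻¹' (Ioc x y) ∩ Ioc 0 t
        = {s : ℝ | s ∈ Ioc 0 t ∧ (τ s).toReal ≤ y} \ {s : ℝ | s ∈ Ioc 0 t ∧ (τ s).toReal ≤ x} := by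
      ext s
      simp only [mem_inter_iff, mem_preimage, mem_Ioc, mem_diff, mem_setOf_eq]
      constructor
      · rintro ⟨⟨hx, hy'⟩, hs⟩
        exact ⟨⟨hs, hy'⟩, fun hcon => absurd hx (not_lt.2 hcon.2)⟩
      · rintro ⟨⟨hs, hy'⟩, hcon⟩
        refine ⟨⟨?_, hy'⟩, hs⟩
        by_contra hxc
        exact hcon ⟨hs, not_lt.1 hxc⟩
    rw [hsets, hKS, hKS]
    have hsub : Ioc (0:ℝ) (m x) ⊆ Ioc 0 (m y) := Ioc_subset_Ioc le_rfl (hm_mono hxy)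
    rw [measure_diff hsub measurableSet_Ioc.nullMeasurableSet
      (by rw [Real.volume_Ioc]; exact ENNReal.ofReal_ne_top)]
    rw [Real.volume_Ioc, Real.volume_Ioc, sub_zero, sub_zero]
  -- the comparison measure
  set ν := (volume.withDensity (fun u => (G Y f u)⁻¹)).restrict (Ioc 0 b)
      + (ENNReal.ofReal t - A Y f b) • Measure.dirac b with hν
  have hνIoc : ∀ x y : ℝ, x < y →
      ν (Ioc x y) = ENNReal.ofReal (m y) - ENNReal.ofReal (m x) := by
    intro x y hxy
    rw [hν, Measure.add_apply, Measure.smul_apply, smul_eq_mul,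
      Measure.dirac_apply' _ measurableSet_Ioc,
      Measure.restrict_apply measurableSet_Ioc, Set.Ioc_inter_Ioc, ← mu']
    rw [hFm, hFm]
    rcases le_or_gt b x with hbx | hxb
    · rw [if_pos hbx, if_pos (le_of_lt (lt_of_le_of_lt hbx hxy))]
      have h1 : min y b ≤ max x 0 := le_trans (min_le_right _ _) (le_trans hbx (le_max_left _ _))
      rw [Set.Ioc_eq_empty (not_lt.2 h1), measure_empty]
      have h2 : b ∉ Ioc x y := fun hc => absurd hc.1 (not_lt.2 hbx)
      rw [Set.indicator_of_notMem h2, mul_zero, add_zero, tsub_self]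
    · have hmax : A Y f (max x 0) = A Y f x := A_sup0 x
      have hAx_ne : A Y f (max x 0) ≠ ∞ := by
        refine fun h => hAb_ne (top_le_iff.1 (h ▸ A_mono ?_))
        exact max_le hxb.le hb0
      rw [if_neg (not_le.2 hxb)]
      rcases le_or_gt b y with hby | hyb
      · rw [if_pos hby, min_eq_right hby]
        have h2 : b ∈ Ioc x y := ⟨hxb, hby⟩
        rw [Set.indicator_of_mem h2, Pi.one_apply, mul_one]
        rw [mu'_Ioc hY_right hf (le_max_right x 0) hAx_ne, hmax]
        have hxb' : A Y f x ≤ A Y f b := A_mono (le_trans (le_max_left x 0) (max_le hxb.le hb0))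
        rw [add_comm]
        exact tsub_add_tsub_cancel hAb_le hxb'
      · rw [if_neg (not_le.2 hyb), min_eq_left hyb.le]
        have h2 : b ∉ Ioc x y := fun hc => absurd hc.2 (not_le.2 hyb)
        rw [Set.indicator_of_notMem h2, mul_zero, add_zero]
        rw [mu'_Ioc hY_right hf (le_max_right x 0) hAx_ne, hmax]
  -- the two measures agree
  have hfinμ : IsFiniteMeasure μ := by
    constructor
    rw [hμ, Measure.map_apply hTmeas MeasurableSet.univ, Set.preimage_univ,
      Measure.restrict_apply_univ, Real.volume_Ioc]
    exact ENNReal.ofReal_lt_top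
  have hμuniv : μ Set.univ = ENNReal.ofReal t := by
    rw [hμ, Measure.map_apply hTmeas MeasurableSet.univ, Set.preimage_univ,
      Measure.restrict_apply_univ, Real.volume_Ioc, sub_zero]
  have hνuniv : ν Set.univ = ENNReal.ofReal t := by
    rw [hν, Measure.add_apply, Measure.smul_apply, smul_eq_mul,
      Measure.dirac_apply' _ MeasurableSet.univ,
      Set.indicator_of_mem (Set.mem_univ b), Pi.one_apply, mul_one,
      Measure.restrict_apply_univ, ← mu', ← A_eq_mu']
    exact add_tsub_cancel_of_le hAb_le
  have hμν : μ = ν := by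
    refine Measure.ext_of_Ioc_finite μ ν (by rw [hμuniv, hνuniv]) fun x y hxy => ?_
    rw [hμIoc x y hxy.le, hνIoc x y hxy]
  -- conclude
  have hRHS : (∫⁻ s in Set.Ioc (0:ℝ) t, G Y f ((τ s).toReal)) = ∫⁻ x, G Y f x ∂μ := by
    rw [hμ, lintegral_map hGmeas hTmeas]
  rw [hRHS, hμν, hν, lintegral_add_measure, lintegral_smul_measure,
    lintegral_dirac' b hGmeas]
  have hpart1 : ∫⁻ x, G Y f x ∂((volume.withDensity (fun u => (G Y f u)⁻¹)).restrict (Ioc 0 b))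
      = ENNReal.ofReal b := by
    rw [restrict_withDensity measurableSet_Ioc,
      lintegral_withDensity_eq_lintegral_mul _ (f := fun u => (G Y f u)⁻¹) hGmeas.inv hGmeas]
    have h1 : ∀ᵐ u ∂(volume.restrict (Ioc (0:ℝ) b)), u ∈ Ioc (0:ℝ) b :=
      ae_restrict_mem measurableSet_Ioc
    have h2 : ∀ᵐ u ∂(volume.restrict (Ioc (0:ℝ) b)), u ≠ b := by
      refine ae_iff.2 ?_
      have hset : {u : ℝ | ¬ u ≠ b} = {b} := by ext u; simp
      rw [hset]
      exact le_antisymm ((Measure.restrict_apply_le _ _).trans_eq Real.volume_singleton)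
        (zero_le)
    have hae : ∀ᵐ u ∂(volume.restrict (Ioc (0:ℝ) b)),
        ((fun u => (G Y f u)⁻¹) * G Y f) u = 1 := by
      filter_upwards [h1, h2] with u hu hub
      have hub' : u < b := lt_of_le_of_ne hu.2 hub
      exact ENNReal.inv_mul_cancel (hGpos u hu.1.le hub') (G_ne_top u)
    rw [lintegral_congr_ae hae, lintegral_one, Measure.restrict_apply_univ, Real.volume_Ioc,
      sub_zero]
  have hpart2 : (ENNReal.ofReal t - A Y f b) * G Y f b = 0 := by
    rcases lt_or_eq_of_le hAb_le with h | h
    · rw [hdirac h, mul_zero]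
    · rw [h, tsub_self, zero_mul]
  rw [hpart1, smul_eq_mul, hpart2, add_zero]
  exact hτt

include hY_right hf ht1 heq in
lemma tau_lt_top_of_bounded {t K : ℝ} (htpos : 0 < t) (hK : 0 ≤ K)
    (hbd : ∀ s, 0 < s → s < t → tau Y f t0 s ≤ ENNReal.ofReal K) : tau Y f t0 t ≠ ∞ := by
  rcases eq_or_ne t0 ∞ with ht0top | ht0top
  swap
  · exact fun h => ht0top (top_le_iff.1 (h ▸ tau_le_t0 t))
  have hC : ∀ s, 0 < s → s < t → C Y f s ≤ ENNReal.ofReal K := by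
    intro s hs1 hs2
    have h := hbd s hs1 hs2
    rwa [tau, ht0top, min_eq_left le_top] at h
  have hA1 : ∀ s, 0 < s → s < t → ENNReal.ofReal s ≤ A Y f (K+1) := by
    intro s hs1 hs2
    have h1 : C Y f s < ENNReal.ofReal (K+1) :=
      lt_of_le_of_lt (hC s hs1 hs2) ((ENNReal.ofReal_lt_ofReal_iff (by linarith)).2 (by linarith))
    obtain ⟨w, hw0, hwA, hwK⟩ := C_witness h1
    have hw : w < K+1 := (ENNReal.ofReal_lt_ofReal_iff_of_nonneg hw0).1 hwK
    exact le_trans hwA.le (A_mono hw.le)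
  have hA2 : ENNReal.ofReal t ≤ A Y f (K+1) := by
    have htend : Tendsto (fun n : ℕ => ENNReal.ofReal (t - 1/(n+1))) atTop
        (𝓝 (ENNReal.ofReal t)) := by
      refine (ENNReal.continuous_ofReal.tendsto t).comp ?_
      have h := tendsto_one_div_add_atTop_nhds_zero_nat (𝕜 := ℝ)
      simpa using (tendsto_const_nhds (x := t)).sub h
    refine le_of_tendsto htend ?_
    obtain ⟨n₀, hn₀⟩ := exists_nat_one_div_lt htpos
    refine eventually_atTop.2 ⟨n₀, fun n hn => ?_⟩
    have h1 : (1:ℝ)/(n+1) ≤ 1/(n₀+1) := by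
      apply one_div_le_one_div_of_le (by positivity)
      have : (n₀:ℝ) ≤ n := Nat.cast_le.2 hn
      linarith
    have h2 : (0:ℝ) < 1/(n+1) := by positivity
    exact hA1 _ (by linarith) (by linarith)
  have hA3 : A Y f (K+1) ≠ ∞ := by
    intro h
    have h2 : t1 ≤ ENNReal.ofReal (K+1) := ht1 ▸ iInf_le _ (⟨K+1, by linarith, h⟩ : {t : ℝ // 0 ≤ t ∧ A Y f t = ∞})
    rw [← heq, ht0top] at h2
    exact ENNReal.ofReal_ne_top (top_le_iff.1 h2)
  have hA4 : ENNReal.ofReal t < A Y f (K+2) :=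
    lt_of_le_of_lt hA2 (A_strict hY_right hf (by linarith) (by linarith) hA3)
  intro hcon
  have hC4 : C Y f t ≤ ENNReal.ofReal (K+2) := C_le (by linarith) hA4
  have hCt : C Y f t = ∞ := by rwa [tau, ht0top, min_eq_left le_top] at hcon
  rw [hCt] at hC4
  exact ENNReal.ofReal_ne_top (top_le_iff.1 hC4)

include hY_right hf hf0 ht0 ht1 heq in
lemma lintegral_eq_top_of_tau_top {t : ℝ} (ht : 0 ≤ t) (htop : tau Y f t0 t = ∞) :
    (∫⁻ s in Set.Ioc (0:ℝ) t, G Y f ((tau Y f t0 s).toReal)) = ∞ := by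
  rcases eq_or_lt_of_le ht with h0 | htpos
  · exfalso
    rw [← h0, tau_nonpos hY_right hf le_rfl] at htop
    simp at htop
  by_cases hfin : ∀ s, 0 < s → s < t → tau Y f t0 s ≠ ∞
  · have hunbdd : ∀ K : ℝ, 0 ≤ K → ∃ s, 0 < s ∧ s < t ∧ ¬ tau Y f t0 s ≤ ENNReal.ofReal K := by
      intro K hK
      by_contra hcon
      push_neg at hcon
      exact (tau_lt_top_of_bounded hY_right hf ht1 heq htpos hK hcon) htop
    refine ENNReal.eq_top_of_forall_nnreal_le fun r => ?_
    obtain ⟨s, hs0, hst, hsr⟩ := hunbdd r r.coe_nonneg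
    have hτs := tau_eq_lintegral hY_right hf hf0 ht0 ht1 heq hs0.le (hfin s hs0 hst)
    calc (r : ℝ≥0∞) ≤ tau Y f t0 s := by
          rw [← ENNReal.ofReal_coe_nnreal]; exact (not_le.1 hsr).le
    _ = ∫⁻ u in Ioc (0:ℝ) s, G Y f ((tau Y f t0 u).toReal) := hτs
    _ ≤ _ := lintegral_mono_set (Ioc_subset_Ioc le_rfl hst.le)
  · push_neg at hfin
    obtain ⟨s₁, hs₁0, hs₁t, hs₁⟩ := hfin
    set E := {s : ℝ | s ∈ Icc 0 t ∧ tau Y f t0 s = ∞} with hE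
    have hEne : E.Nonempty := ⟨s₁, ⟨hs₁0.le, hs₁t.le⟩, hs₁⟩
    have hEbdd : BddBelow E := ⟨0, fun x hx => hx.1.1⟩
    set σ := sInf E with hσ
    have hσ0 : 0 ≤ σ := le_csInf hEne fun x hx => hx.1.1
    have hσt : σ ≤ t := le_trans (csInf_le hEbdd ⟨⟨hs₁0.le, hs₁t.le⟩, hs₁⟩) hs₁t.le
    have hinf_above : ∀ r, σ < r → tau Y f t0 r = ∞ := by
      intro r hr
      obtain ⟨e, heE, her⟩ := (csInf_lt_iff hEbdd hEne).1 hr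
      exact top_le_iff.1 (heE.2 ▸ tau_mono her.le)
    have hfin_below : ∀ r, 0 ≤ r → r < σ → tau Y f t0 r ≠ ∞ := by
      intro r hr0 hrσ hcon
      exact absurd (csInf_le hEbdd ⟨⟨hr0, le_trans hrσ.le hσt⟩, hcon⟩) (not_le.2 hrσ)
    have hCtop : ∀ u, σ < u → C Y f u = ∞ := by
      intro u hu
      have h2 := hinf_above u hu
      have h3 : (⊤:ℝ≥0∞) ≤ C Y f u := by
        rw [← h2]; exact min_le_left _ _
      exact top_le_iff.1 h3
    rcases eq_or_lt_of_le hσ0 with hσeq | hσpos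
    · exfalso
      have hCA : ∀ r, 0 < r → A Y f 1 ≤ ENNReal.ofReal r := by
        intro r hr
        by_contra hcon
        have h3 : C Y f r ≤ ENNReal.ofReal 1 := C_le (by norm_num) (lt_of_not_ge hcon)
        rw [hCtop r (hσeq ▸ hr)] at h3
        exact ENNReal.ofReal_ne_top (top_le_iff.1 h3)
      have hA1 : A Y f 1 ≤ 0 := by
        have h := le_ofReal_of_forall le_rfl (fun u hu => hCA u hu)
        simpa using h
      exact absurd hA1 (not_le.2 (A_pos hY_right hf one_pos))
    by_cases hbdd : ∃ K : ℝ, 0 ≤ K ∧ ∀ s, 0 < s → s < σ → tau Y f t0 s ≤ ENNReal.ofReal K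
    · exfalso
      obtain ⟨K, hK0, hK⟩ := hbdd
      have h1 : tau Y f t0 σ ≠ ∞ := tau_lt_top_of_bounded hY_right hf ht1 heq hσpos hK0 hK
      have ht0top : t0 = ∞ := by
        have h2 := hinf_above (σ+1) (by linarith)
        have h3 : (⊤:ℝ≥0∞) ≤ t0 := by
          rw [← h2]; exact min_le_right _ _
        exact top_le_iff.1 h3
      have hAle : ∀ s : ℝ, 0 ≤ s → A Y f s ≤ ENNReal.ofReal σ := by
        intro s hs
        refine le_ofReal_of_forall hσ0 fun u hu => ?_
        by_contra hcon
        have h3 : C Y f u ≤ ENNReal.ofReal s := C_le hs (lt_of_not_ge hcon)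
        rw [hCtop u hu] at h3
        exact ENNReal.ofReal_ne_top (top_le_iff.1 h3)
      have hCσ : C Y f σ ≠ ∞ := by rwa [tau, ht0top, min_eq_left le_top] at h1
      obtain ⟨w, hw0, hwA, -⟩ := C_witness (lt_top_iff_ne_top.2 hCσ)
      exact absurd (hAle w hw0) (not_le.2 hwA)
    · push_neg at hbdd
      refine ENNReal.eq_top_of_forall_nnreal_le fun r => ?_
      obtain ⟨s, hs0, hsσ, hsr⟩ := hbdd r r.coe_nonneg
      have hst : s < t := lt_of_lt_of_le hsσ hσt
      have hfs : tau Y f t0 s ≠ ∞ := hfin_below s hs0.le hsσ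
      have hτs := tau_eq_lintegral hY_right hf hf0 ht0 ht1 heq hs0.le hfs
      calc (r : ℝ≥0∞) ≤ tau Y f t0 s := by
            rw [← ENNReal.ofReal_coe_nnreal]; exact hsr.le
      _ = ∫⁻ u in Ioc (0:ℝ) s, G Y f ((tau Y f t0 u).toReal) := hτs
      _ ≤ _ := lintegral_mono_set (Ioc_subset_Ioc le_rfl hst.le)

end MainLemma

section Uniqueness

variable {t0 t1 : ℝ≥0∞} {υ : ℝ → ℝ≥0∞}
variable (hY_right : ∀ t : ℝ, Tendsto Y (nhdsWithin t (Set.Ici t)) (nhds (Y t)))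
  (hY_left : ∀ t : ℝ, ∃ l : ℝ, Tendsto Y (nhdsWithin t (Set.Iio t)) (nhds l))
  (hf : Continuous f) (hf0 : ∀ x, 0 ≤ f x)
  (ht0 : t0 = ⨅ t : {t : ℝ // 0 ≤ t ∧ f (Y t) = 0}, ENNReal.ofReal t.1)
  (ht1 : t1 = ⨅ t : {t : ℝ // 0 ≤ t ∧ A Y f t = ∞}, ENNReal.ofReal t.1)
  (heq : t0 = t1)
  (hmono : ∀ s t : ℝ, 0 ≤ s → s ≤ t → υ s ≤ υ t)
  (heqn : ∀ t : ℝ, 0 ≤ t →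
    (∫⁻ s in Set.Ioc (0:ℝ) t, G Y f ((υ s).toReal)) ≠ ∞ →
    υ t = ∫⁻ s in Set.Ioc (0:ℝ) t, G Y f ((υ s).toReal))

include hY_right hY_left hf hmono in
lemma sol_lintegral_ne_top {t : ℝ} (ht : 0 ≤ t) (hfin : υ t ≠ ∞) :
    (∫⁻ s in Set.Ioc (0:ℝ) t, G Y f ((υ s).toReal)) ≠ ∞ := by
  obtain ⟨cb, hcb, hbd⟩ := G_bounded hY_right hY_left hf ((υ t).toReal)
  have hb : ∀ s ∈ Ioc (0:ℝ) t, G Y f ((υ s).toReal) ≤ cb := fun s hs =>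
    hbd _ ENNReal.toReal_nonneg (ENNReal.toReal_mono hfin (hmono s t hs.1.le hs.2))
  have h1 : (∫⁻ s in Set.Ioc (0:ℝ) t, G Y f ((υ s).toReal)) ≤ cb * ENNReal.ofReal t := by
    calc (∫⁻ s in Set.Ioc (0:ℝ) t, G Y f ((υ s).toReal))
        ≤ ∫⁻ _ in Set.Ioc (0:ℝ) t, cb := setLIntegral_mono' measurableSet_Ioc hb
    _ = cb * ENNReal.ofReal t := by
        rw [setLIntegral_const, Real.volume_Ioc, sub_zero]
  intro h
  rw [h] at h1
  exact absurd (lt_of_le_of_lt h1 (ENNReal.mul_lt_top hcb.lt_top ENNReal.ofReal_lt_top))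
    (lt_irrefl _)

lemma sol_zero (heqn0 : (∫⁻ s in Set.Ioc (0:ℝ) 0, G Y f ((υ s).toReal)) ≠ ∞ →
    υ 0 = ∫⁻ s in Set.Ioc (0:ℝ) 0, G Y f ((υ s).toReal)) : υ 0 = 0 := by
  have hempty : (∫⁻ s in Set.Ioc (0:ℝ) 0, G Y f ((υ s).toReal)) = 0 := by
    rw [Set.Ioc_self, Measure.restrict_empty, lintegral_zero_measure]
  rw [heqn0 (hempty ▸ ENNReal.zero_ne_top), hempty]

include hY_right hY_left hf hmono heqn in
/-- Change of variables for solutions: `A(υ_t) = |{s ∈ (0,t] : f(Y_{υ_s}) ≠ 0}|`. -/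
lemma sol_A_eq {t : ℝ} (ht : 0 ≤ t) (hfin : υ t ≠ ∞) :
    A Y f ((υ t).toReal)
      = volume ({s : ℝ | G Y f ((υ (min (max s 0) t)).toReal) ≠ 0} ∩ Ioc 0 t) := by
  have hGmeas := measurable_G hY_right hf
  have hυ0 : υ 0 = 0 := sol_zero (heqn 0 le_rfl)
  set V : ℝ → ℝ := fun s => (υ (min (max s 0) t)).toReal with hV
  have hclamp : ∀ s, 0 ≤ s → s ≤ t → V s = (υ s).toReal := by
    intro s h1 h2; rw [hV]; dsimp only; rw [max_eq_left h1, min_eq_left h2]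
  have hfin2 : ∀ s, 0 ≤ s → s ≤ t → υ s ≠ ∞ := by
    intro s h1 h2 hcon
    have h3 := hmono s t h1 h2
    rw [hcon] at h3
    exact hfin (top_le_iff.1 h3)
  have hfin' : ∀ s, υ (min (max s 0) t) ≠ ∞ :=
    fun s => hfin2 _ (le_min (le_max_right s 0) ht) (min_le_right _ _)
  have hVmono : Monotone V := by
    intro s s' hss
    refine ENNReal.toReal_mono (hfin' s') (hmono _ _ (le_min (le_max_right s 0) ht) ?_)
    exact min_le_min (max_le_max hss le_rfl) le_rfl
  have hVmeas : Measurable V := hVmono.measurable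
  have hV_nonneg : ∀ s, 0 ≤ V s := fun s => ENNReal.toReal_nonneg
  have hV0 : ∀ s, s ≤ 0 → V s = 0 := by
    intro s hs; rw [hV]; dsimp only; rw [max_eq_right hs, min_eq_left ht, hυ0]; simp
  have hυV : ∀ s, 0 ≤ s → s ≤ t → υ s = ENNReal.ofReal (V s) := by
    intro s h1 h2
    rw [hclamp s h1 h2, ENNReal.ofReal_toReal (hfin2 s h1 h2)]
  have hVt_eq : V t = (υ t).toReal := hclamp t ht le_rfl
  -- Lipschitz bound
  obtain ⟨cb, hcbtop, hbd⟩ := G_bounded hY_right hY_left hf ((υ t).toReal)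
  have hGV_le : ∀ s, G Y f (V s) ≤ cb := fun s =>
    hbd _ (hV_nonneg s) (ENNReal.toReal_mono hfin
      (hmono _ t (le_min (le_max_right s 0) ht) (min_le_right _ _)))
  have hRHSfin : ∀ s, 0 ≤ s → s ≤ t →
      (∫⁻ u in Set.Ioc (0:ℝ) s, G Y f ((υ u).toReal)) ≠ ∞ :=
    fun s h1 h2 => sol_lintegral_ne_top hY_right hY_left hf hmono h1 (hfin2 s h1 h2)
  have heqs : ∀ s, 0 ≤ s → s ≤ t → υ s = ∫⁻ u in Set.Ioc (0:ℝ) s, G Y f ((υ u).toReal) :=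
    fun s h1 h2 => heqn s h1 (hRHSfin s h1 h2)
  have hadd : ∀ x y, 0 ≤ x → x ≤ y → y ≤ t →
      υ y = υ x + ∫⁻ u in Set.Ioc x y, G Y f ((υ u).toReal) := by
    intro x y h1 h2 h3
    rw [heqs y (h1.trans h2) h3, heqs x h1 (h2.trans h3),
      ← Set.Ioc_union_Ioc_eq_Ioc h1 h2,
      Measure.restrict_union (Set.Ioc_disjoint_Ioc_of_le le_rfl) measurableSet_Ioc,
      lintegral_add_measure]
  have hcongr : ∀ x y : ℝ, 0 ≤ x → y ≤ t → (∫⁻ u in Set.Ioc x y, G Y f ((υ u).toReal))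
      = ∫⁻ u in Set.Ioc x y, G Y f (V u) := by
    intro x y h1 h2
    refine setLIntegral_congr_fun measurableSet_Ioc (fun u hu => ?_)
    rw [hclamp u (le_trans h1 hu.1.le) (le_trans hu.2 h2)]
  have hcb0 : 0 ≤ cb.toReal := ENNReal.toReal_nonneg
  have hdiff : ∀ x y, 0 ≤ x → x ≤ y → y ≤ t → V y - V x ≤ cb.toReal * (y - x) := by
    intro x y h1 h2 h3
    have h4 := hadd x y h1 h2 h3
    have h5 : υ y - υ x ≤ cb * ENNReal.ofReal (y - x) := by
      rw [h4, ENNReal.add_sub_cancel_left (hfin2 x h1 (h2.trans h3))]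
      calc ∫⁻ u in Set.Ioc x y, G Y f ((υ u).toReal)
          = ∫⁻ u in Set.Ioc x y, G Y f (V u) := hcongr x y h1 h3
      _ ≤ ∫⁻ _ in Set.Ioc x y, cb := setLIntegral_mono' measurableSet_Ioc (fun u _ => hGV_le u)
      _ = cb * ENNReal.ofReal (y - x) := by rw [setLIntegral_const, Real.volume_Ioc]
    have h6 : ENNReal.ofReal (V y - V x) ≤ ENNReal.ofReal (cb.toReal * (y - x)) := by
      rw [ENNReal.ofReal_sub _ (hV_nonneg x), ← hυV y (h1.trans h2) h3, ← hυV x h1 (h2.trans h3)]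
      refine le_trans h5 ?_
      rw [ENNReal.ofReal_mul hcb0, ENNReal.ofReal_toReal hcbtop]
    exact (ENNReal.ofReal_le_ofReal_iff (mul_nonneg hcb0 (by linarith))).1 h6
  -- the running supremum β
  set S : ℝ → Set ℝ := fun y => {s | s ∈ Icc 0 t ∧ V s ≤ y} with hS
  have hS0 : ∀ y, 0 ≤ y → (0:ℝ) ∈ S y := by
    intro y hy
    exact ⟨⟨le_rfl, ht⟩, by rw [hV0 0 le_rfl]; exact hy⟩
  have hSbdd : ∀ y, BddAbove (S y) := fun y => ⟨t, fun x hx => hx.1.2⟩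
  set β : ℝ → ℝ := fun y => sSup (S y) with hβ
  have hβ_mem : ∀ y, 0 ≤ y → β y ∈ Icc 0 t := by
    intro y hy
    exact ⟨le_csSup (hSbdd y) (hS0 y hy), csSup_le ⟨0, hS0 y hy⟩ (fun x hx => hx.1.2)⟩
  have hβ2a : ∀ y s, 0 ≤ y → s ∈ Icc 0 t → V s ≤ y → s ≤ β y :=
    fun y s _ hs hVs => le_csSup (hSbdd y) ⟨hs, hVs⟩
  have hβV : ∀ y, 0 ≤ y → V (β y) ≤ y := by
    intro y hy
    by_contra hcon
    push_neg at hcon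
    set ε := (V (β y) - y)/(cb.toReal + 1) with hε
    have hεpos : 0 < ε := div_pos (by linarith) (by linarith)
    obtain ⟨s, hsS, hs⟩ := exists_lt_of_lt_csSup ⟨0, hS0 y hy⟩
      (show β y - ε < β y by linarith)
    have hsβ : s ≤ β y := le_csSup (hSbdd y) hsS
    have h7 : V (β y) - V s ≤ cb.toReal * (β y - s) :=
      hdiff s (β y) hsS.1.1 hsβ (hβ_mem y hy).2
    have h8 : cb.toReal * (β y - s) ≤ cb.toReal * ε :=
      mul_le_mul_of_nonneg_left (by linarith) hcb0
    have h9 : cb.toReal * ε < (cb.toReal + 1) * ε := by nlinarith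
    have h10 : (cb.toReal + 1) * ε = V (β y) - y := by
      rw [hε, mul_div_cancel₀ _ (by linarith : cb.toReal + 1 ≠ 0)]
    have h11 := hsS.2
    linarith
  have hβ2b : ∀ y s, 0 ≤ y → s ≤ β y → V s ≤ y :=
    fun y s hy hsβ => le_trans (hVmono hsβ) (hβV y hy)
  have hβ3 : ∀ y, 0 ≤ y → y < V t → V (β y) = y := by
    intro y hy hyV
    refine le_antisymm (hβV y hy) ?_
    by_contra hcon
    push_neg at hcon
    have hβt : β y < t := by
      rcases lt_or_eq_of_le (hβ_mem y hy).2 with h | h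
      · exact h
      · exfalso; rw [h] at hcon; linarith
    set δ := (y - V (β y))/(cb.toReal + 1) with hδ
    have hδpos : 0 < δ := div_pos (by linarith) (by linarith)
    set s' := min t (β y + δ) with hs'
    have hs'1 : β y < s' := lt_min hβt (by linarith)
    have hs'2 : s' ≤ t := min_le_left _ _
    have h7 : V s' - V (β y) ≤ cb.toReal * (s' - β y) :=
      hdiff (β y) s' (hβ_mem y hy).1 hs'1.le hs'2
    have h8 : s' - β y ≤ δ := by
      have := min_le_right t (β y + δ); rw [hs']; linarith [min_le_right t (β y + δ)]
    have h9 : cb.toReal * δ < (cb.toReal + 1) * δ := by nlinarith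
    have h10 : (cb.toReal + 1) * δ = y - V (β y) := by
      rw [hδ, mul_div_cancel₀ _ (by linarith : cb.toReal + 1 ≠ 0)]
    have h11 : V s' ≤ y := by
      have h12 : cb.toReal * (s' - β y) ≤ cb.toReal * δ :=
        mul_le_mul_of_nonneg_left h8 hcb0
      linarith
    have := hβ2a y s' hy ⟨le_trans (hβ_mem y hy).1 hs'1.le, hs'2⟩ h11
    linarith
  have hβ4 : ∀ y, 0 ≤ y → V t ≤ y → β y = t := by
    intro y hy hyV
    exact le_antisymm (hβ_mem y hy).2 (hβ2a y t hy ⟨ht, le_rfl⟩ hyV)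
  -- the pushforward measure
  set n : ℝ → ℝ := fun y => if 0 ≤ y then β y else 0 with hn
  have hn_nonneg : ∀ y, 0 ≤ n y := by
    intro y; rw [hn]; dsimp only; split
    · next hy => exact (hβ_mem y hy).1
    · exact le_rfl
  have hn_le_t : ∀ y, n y ≤ t := by
    intro y; rw [hn]; dsimp only; split
    · next hy => exact (hβ_mem y hy).2
    · exact ht
  set ρ := (volume.restrict (Ioc (0:ℝ) t)).withDensity (fun s => G Y f (V s)) with hρ
  set μ₂ := Measure.map V ρ with hμ₂
  have hGVmeas : Measurable (fun s => G Y f (V s)) := hGmeas.comp hVmeas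
  have hρap : ∀ E : Set ℝ, MeasurableSet E → ρ E = ∫⁻ u in E ∩ Ioc (0:ℝ) t, G Y f (V u) := by
    intro E hE
    rw [hρ, withDensity_apply _ hE, Measure.restrict_restrict hE]
  have hυny : ∀ y, υ (n y) = ENNReal.ofReal (V (n y)) :=
    fun y => hυV _ (hn_nonneg y) (hn_le_t y)
  have hpre : ∀ x y : ℝ, V ⁻¹' (Ioc x y) ∩ Ioc 0 t = Ioc (n x) (n y) := by
    intro x y
    ext s
    simp only [mem_inter_iff, mem_preimage, mem_Ioc]
    constructor
    · rintro ⟨⟨hxV, hVy⟩, hs0, hst⟩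
      have hy0 : 0 ≤ y := le_trans (hV_nonneg s) hVy
      refine ⟨?_, ?_⟩
      · rw [hn]; dsimp only; split
        · next hx0 =>
          by_contra hcon
          push_neg at hcon
          exact absurd (hβ2b x s hx0 hcon) (not_le.2 hxV)
        · exact hs0
      · rw [hn]; dsimp only; rw [if_pos hy0]
        exact hβ2a y s hy0 ⟨hs0.le, hst⟩ hVy
    · rintro ⟨hns, hsn⟩
      have hs0 : 0 < s := lt_of_le_of_lt (hn_nonneg x) hns
      have hst : s ≤ t := le_trans hsn (hn_le_t y)
      rcases le_or_gt 0 y with hy0 | hy0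
      · have hny : n y = β y := if_pos hy0
        refine ⟨⟨?_, ?_⟩, hs0, hst⟩
        · rw [hn] at hns; revert hns; dsimp only; split
          · next hx0 =>
            intro hns
            by_contra hcon
            push_neg at hcon
            exact absurd (hβ2a x s hx0 ⟨hs0.le, hst⟩ hcon) (not_le.2 hns)
          · next hx0 =>
            intro _
            push_neg at hx0
            exact lt_of_lt_of_le hx0 (hV_nonneg s)
        · rw [hny] at hsn
          exact hβ2b y s hy0 hsn
      · exfalso
        have hny0 : n y = 0 := if_neg (not_le.2 hy0)
        rw [hny0] at hsn
        linarith
  have hμ₂Ioc : ∀ x y : ℝ, μ₂ (Ioc x y) = υ (n y) - υ (n x) := by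
    intro x y
    rw [hμ₂, Measure.map_apply hVmeas measurableSet_Ioc,
      hρap _ (hVmeas measurableSet_Ioc), hpre]
    rcases le_or_gt (n x) (n y) with hxy | hxy
    · have h1 := hadd (n x) (n y) (hn_nonneg x) hxy (hn_le_t y)
      rw [hcongr _ _ (hn_nonneg x) (hn_le_t y)] at h1
      rw [h1, ENNReal.add_sub_cancel_left (hfin2 _ (hn_nonneg x) ((hn_le_t x)))]
    · rw [Ioc_eq_empty (not_lt.2 hxy.le), Measure.restrict_empty, lintegral_zero_measure,
        eq_comm, tsub_eq_zero_iff_le]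
      exact hmono _ _ (hn_nonneg y) hxy.le
  have hμ₂univ : μ₂ Set.univ = ENNReal.ofReal ((υ t).toReal) := by
    rw [hμ₂, Measure.map_apply hVmeas MeasurableSet.univ, preimage_univ,
      hρap _ MeasurableSet.univ, univ_inter, ← hcongr 0 t le_rfl le_rfl,
      ← heqs t ht le_rfl, ENNReal.ofReal_toReal hfin]
  have hμ₂fin : IsFiniteMeasure μ₂ := by
    constructor
    rw [hμ₂univ]
    exact ENNReal.ofReal_lt_top
  have hμ₂eq : μ₂ = volume.restrict (Ioc 0 ((υ t).toReal)) := by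
    refine Measure.ext_of_Ioc_finite _ _ ?_ fun x y hxy => ?_
    · rw [hμ₂univ, Measure.restrict_apply_univ, Real.volume_Ioc, sub_zero]
    · rw [hμ₂Ioc, Measure.restrict_apply measurableSet_Ioc, Set.Ioc_inter_Ioc,
        Real.volume_Ioc, hυny, hυny]
      have hVn : ∀ z, 0 ≤ z → V (n z) = min z ((υ t).toReal) := by
        intro z hz
        have hnz : n z = β z := if_pos hz
        rcases lt_or_ge z (V t) with h | h
        · rw [hnz, hβ3 z hz h, eq_comm]
          rw [hVt_eq] at h
          exact min_eq_left h.le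
        · rw [hnz, hβ4 z hz h, hVt_eq, eq_comm]
          rw [hVt_eq] at h
          exact min_eq_right h
      rcases le_or_gt 0 y with hy0 | hy0
      · rw [hVn y hy0]
        rcases le_or_gt 0 x with hx0 | hx0
        · rw [hVn x hx0, max_eq_left hx0]
          rcases le_or_gt x ((υ t).toReal) with hxW | hxW
          · rw [min_eq_left hxW, ENNReal.ofReal_sub _ hx0]
          · rw [min_eq_right hxW.le, min_eq_right (le_trans hxW.le hxy.le), tsub_self,
              eq_comm]
            exact ENNReal.ofReal_of_nonpos (by linarith)
        · have hnx0 : n x = 0 := if_neg (not_le.2 hx0)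
          rw [hnx0, hV0 0 le_rfl, max_eq_right hx0.le]
          simp
      · have hny0 : n y = 0 := if_neg (not_le.2 hy0)
        have hnx0 : n x = 0 := if_neg (not_le.2 (hxy.trans hy0))
        rw [hny0, hnx0, hV0 0 le_rfl, tsub_self, eq_comm]
        apply ENNReal.ofReal_of_nonpos
        have h1 : min y ((υ t).toReal) ≤ y := min_le_left _ _
        have h2 : (0:ℝ) ≤ max x 0 := le_max_right _ _
        linarith
  -- final computation
  have hset : MeasurableSet {u : ℝ | G Y f (V u) ≠ 0} :=
    (hGVmeas (measurableSet_singleton 0)).compl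
  have hfinal : A Y f ((υ t).toReal) = volume ({u : ℝ | G Y f (V u) ≠ 0} ∩ Ioc 0 t) := by
    calc A Y f ((υ t).toReal)
        = ∫⁻ u, (G Y f u)⁻¹ ∂(volume.restrict (Ioc 0 ((υ t).toReal))) := rfl
    _ = ∫⁻ u, (G Y f u)⁻¹ ∂μ₂ := by rw [hμ₂eq]
    _ = ∫⁻ s, (G Y f (V s))⁻¹ ∂ρ := by rw [hμ₂, lintegral_map (f := fun u => (G Y f u)⁻¹) hGmeas.inv hVmeas]
    _ = ∫⁻ s in Ioc (0:ℝ) t,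
          ((fun s => G Y f (V s)) * fun s => (G Y f (V s))⁻¹) s := by
        rw [hρ, lintegral_withDensity_eq_lintegral_mul _ hGVmeas (g := fun s => (G Y f (V s))⁻¹) hGVmeas.inv]
    _ = ∫⁻ s in Ioc (0:ℝ) t,
          Set.indicator {u : ℝ | G Y f (V u) ≠ 0} (fun _ => 1) s := by
        refine setLIntegral_congr_fun measurableSet_Ioc (fun s _ => ?_)
        simp only [Pi.mul_apply]
        rcases eq_or_ne (G Y f (V s)) 0 with h | h
        · rw [h, zero_mul, Set.indicator_of_notMem (by simp [h])]
        · rw [ENNReal.mul_inv_cancel h (G_ne_top _), Set.indicator_of_mem (by simp [h])]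
    _ = volume ({u : ℝ | G Y f (V u) ≠ 0} ∩ Ioc 0 t) := by
        rw [lintegral_indicator hset, setLIntegral_one, Measure.restrict_apply hset]
  exact hfinal

include hY_right hY_left hf hf0 ht0 ht1 heq hmono heqn in
lemma sol_eq_tau {t : ℝ} (ht : 0 ≤ t) (hfin : υ t ≠ ∞) : υ t = tau Y f t0 t := by
  have hfin2 : ∀ s, 0 ≤ s → s ≤ t → υ s ≠ ∞ := by
    intro s h1 h2 hcon
    have h3 := hmono s t h1 h2
    rw [hcon] at h3
    exact hfin (top_le_iff.1 h3)
  have hυ_toReal : ∀ s, 0 ≤ s → s ≤ t → υ s = ENNReal.ofReal ((υ s).toReal) :=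
    fun s h1 h2 => (ENNReal.ofReal_toReal (hfin2 s h1 h2)).symm
  have hstep1 : ∀ s, 0 ≤ s → s ≤ t → υ s ≤ t0 := by
    intro s h1 h2
    by_contra hcon
    push_neg at hcon
    have hA := sol_A_eq hY_right hY_left hf hmono heqn h1 (hfin2 s h1 h2)
    have hAub : A Y f ((υ s).toReal) ≤ ENNReal.ofReal s := by
      rw [hA]
      calc volume _ ≤ volume (Ioc (0:ℝ) s) := measure_mono inter_subset_right
      _ = ENNReal.ofReal s := by rw [Real.volume_Ioc, sub_zero]
    have htop : A Y f ((υ s).toReal) = ∞ := by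
      refine A_eq_top_of_t1_lt ht1 ?_
      rw [← heq, ← hυ_toReal s h1 h2]
      exact hcon
    rw [htop] at hAub
    exact ENNReal.ofReal_ne_top (top_le_iff.1 hAub)
  have hstep2 : ∀ s, 0 < s → s ≤ t → (G Y f ((υ s).toReal) = 0 ↔ υ s = t0) := by
    intro s hs1 hs2
    constructor
    · intro h
      refine le_antisymm (hstep1 s hs1.le hs2) ?_
      by_contra hcon
      push_neg at hcon
      refine G_pos hf0 ht0 ENNReal.toReal_nonneg ?_ h
      rw [← hυ_toReal s hs1.le hs2]
      exact hcon
    · intro h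
      have ht0top : t0 ≠ ∞ := h ▸ (hfin2 s hs1.le hs2)
      have hre : (υ s).toReal = t0.toReal := by rw [h]
      rw [hre]
      exact t0_attained hY_right hf hf0 ht0 ht0top
  have hseteq : {s : ℝ | G Y f ((υ (min (max s 0) t)).toReal) ≠ 0} ∩ Ioc 0 t
      = {s : ℝ | G Y f ((υ s).toReal) ≠ 0} ∩ Ioc 0 t := by
    ext s
    simp only [mem_inter_iff, mem_setOf_eq, mem_Ioc]
    constructor
    · rintro ⟨h1, h2⟩
      refine ⟨?_, h2⟩
      rwa [max_eq_left h2.1.le, min_eq_left h2.2] at h1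
    · rintro ⟨h1, h2⟩
      refine ⟨?_, h2⟩
      rwa [max_eq_left h2.1.le, min_eq_left h2.2]
  have hAVt := sol_A_eq hY_right hY_left hf hmono heqn ht hfin
  rw [hseteq] at hAVt
  set W := (υ t).toReal with hW
  have hWnn : 0 ≤ W := ENNReal.toReal_nonneg
  have hυtW : υ t = ENNReal.ofReal W := hυ_toReal t ht le_rfl
  by_cases hD : ∀ s, 0 < s → s ≤ t → G Y f ((υ s).toReal) ≠ 0
  · have hAW : A Y f W = ENNReal.ofReal t := by
      rw [hAVt]
      have hful : {s : ℝ | G Y f ((υ s).toReal) ≠ 0} ∩ Ioc 0 t = Ioc 0 t := by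
        ext s; simp only [mem_inter_iff, mem_setOf_eq, mem_Ioc]
        exact ⟨fun h => h.2, fun h => ⟨hD s h.1 h.2, h⟩⟩
      rw [hful, Real.volume_Ioc, sub_zero]
    have hAWne : A Y f W ≠ ∞ := by rw [hAW]; exact ENNReal.ofReal_ne_top
    have hCge : ENNReal.ofReal W ≤ C Y f t := by
      refine le_iInf fun u => ?_
      obtain ⟨uv, hu0, huA⟩ := u
      refine ENNReal.ofReal_le_ofReal ?_
      by_contra hcon
      push_neg at hcon
      exact absurd (lt_of_lt_of_le huA (hAW ▸ A_mono hcon.le)) (lt_irrefl _)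
    have hCle : C Y f t ≤ ENNReal.ofReal W := by
      refine le_ofReal_of_forall hWnn fun u hu => ?_
      refine C_le (by linarith) ?_
      rw [← hAW]
      exact A_strict hY_right hf hWnn hu hAWne
    have hCt : C Y f t = υ t := by rw [hυtW]; exact le_antisymm hCle hCge
    rw [tau, hCt, min_eq_left (hstep1 t ht le_rfl)]
  · push_neg at hD
    obtain ⟨s₀, hs₀1, hs₀2, hs₀G⟩ := hD
    have hυt_t0 : υ t = t0 := by
      have h1 : υ s₀ = t0 := (hstep2 s₀ hs₀1 hs₀2).1 hs₀G
      refine le_antisymm (hstep1 t ht le_rfl) ?_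
      rw [← h1]
      exact hmono s₀ t hs₀1.le hs₀2
    have ht0top : t0 ≠ ∞ := hυt_t0 ▸ hfin
    set E := {s : ℝ | s ∈ Icc 0 t ∧ t0 ≤ υ s} with hE
    have hEne : E.Nonempty := ⟨s₀, ⟨hs₀1.le, hs₀2⟩, ((hstep2 s₀ hs₀1 hs₀2).1 hs₀G).ge⟩
    have hEbdd : BddBelow E := ⟨0, fun x hx => hx.1.1⟩
    set θ := sInf E with hθ
    have hθ0 : 0 ≤ θ := le_csInf hEne fun x hx => hx.1.1
    have hθt : θ ≤ t := csInf_le hEbdd ⟨⟨ht, le_rfl⟩, hυt_t0.ge⟩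
    have habove : ∀ s, θ < s → s ≤ t → υ s = t0 := by
      intro s hs1 hs2
      obtain ⟨e, heE, hes⟩ := (csInf_lt_iff hEbdd hEne).1 hs1
      exact le_antisymm (hstep1 s (le_trans heE.1.1 hes.le) hs2)
        (le_trans heE.2 (hmono e s heE.1.1 hes.le))
    have hbelow : ∀ s, 0 < s → s < θ → υ s < t0 := by
      intro s hs1 hs2
      rcases lt_or_ge (υ s) t0 with h | h
      · exact h
      · exact absurd (csInf_le hEbdd ⟨⟨hs1.le, le_trans hs2.le hθt⟩, h⟩) (not_le.2 hs2)
    have hvol : volume ({s : ℝ | G Y f ((υ s).toReal) ≠ 0} ∩ Ioc 0 t)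
        = ENNReal.ofReal θ := by
      have hsub1 : Ioo (0:ℝ) θ ⊆ {s : ℝ | G Y f ((υ s).toReal) ≠ 0} ∩ Ioc 0 t := by
        rintro s ⟨h1, h2⟩
        refine ⟨?_, h1, le_trans h2.le hθt⟩
        intro hG
        have h3 := (hstep2 s h1 (le_trans h2.le hθt)).1 hG
        exact absurd (h3 ▸ hbelow s h1 h2) (lt_irrefl _)
      have hsub2 : {s : ℝ | G Y f ((υ s).toReal) ≠ 0} ∩ Ioc 0 t ⊆ Ioc 0 θ := by
        rintro s ⟨h1, h2⟩
        refine ⟨h2.1, ?_⟩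
        by_contra hcon
        push_neg at hcon
        exact h1 ((hstep2 s h2.1 h2.2).2 (habove s hcon h2.2))
      refine le_antisymm ?_ ?_
      · calc volume _ ≤ volume (Ioc (0:ℝ) θ) := measure_mono hsub2
        _ = ENNReal.ofReal θ := by rw [Real.volume_Ioc, sub_zero]
      · calc ENNReal.ofReal θ = volume (Ioo (0:ℝ) θ) := by rw [Real.volume_Ioo, sub_zero]
        _ ≤ _ := measure_mono hsub1
    have hAW : A Y f W = ENNReal.ofReal θ := by rw [hAVt, hvol]
    have hWt0 : ENNReal.ofReal W = t0 := by
      rw [hW, hυt_t0, ENNReal.ofReal_toReal ht0top]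
    have hCget0 : t0 ≤ C Y f t := by
      refine le_iInf fun u => ?_
      obtain ⟨uv, hu0, huA⟩ := u
      rw [← hWt0]
      refine ENNReal.ofReal_le_ofReal ?_
      by_contra hcon
      push_neg at hcon
      have h1 : A Y f uv ≤ ENNReal.ofReal θ := hAW ▸ A_mono hcon.le
      have h2 : ENNReal.ofReal t < ENNReal.ofReal θ := lt_of_lt_of_le huA h1
      have h3 : ENNReal.ofReal θ ≤ ENNReal.ofReal t := ENNReal.ofReal_le_ofReal hθt
      exact absurd (lt_of_lt_of_le h2 h3) (lt_irrefl _)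
    rw [tau, min_eq_right hCget0, hυt_t0]

include hY_right hY_left hf hf0 ht0 ht1 heq hmono heqn in
lemma sol_eq_tau_all {t : ℝ} (ht : 0 ≤ t) : υ t = tau Y f t0 t := by
  rcases eq_or_ne (υ t) ∞ with htop | hne
  swap
  · exact sol_eq_tau hY_right hY_left hf hf0 ht0 ht1 heq hmono heqn ht hne
  rw [htop, eq_comm]
  set E := {s : ℝ | s ∈ Icc 0 t ∧ υ s = ∞} with hE
  have hEne : E.Nonempty := ⟨t, ⟨ht, le_rfl⟩, htop⟩
  have hEbdd : BddBelow E := ⟨0, fun x hx => hx.1.1⟩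
  set σ := sInf E with hσ
  have hσ0 : 0 ≤ σ := le_csInf hEne fun x hx => hx.1.1
  have hσt : σ ≤ t := csInf_le hEbdd ⟨⟨ht, le_rfl⟩, htop⟩
  have hfinbelow : ∀ s, 0 ≤ s → s < σ → υ s ≠ ∞ := by
    intro s h1 h2 hcon
    exact absurd (csInf_le hEbdd ⟨⟨h1, le_trans h2.le hσt⟩, hcon⟩) (not_le.2 h2)
  by_cases hbdd : ∃ M : ℝ, 0 ≤ M ∧ ∀ s, 0 ≤ s → s < σ → υ s ≤ ENNReal.ofReal M
  · exfalso
    obtain ⟨M, hM0, hM⟩ := hbdd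
    obtain ⟨cb, hcbtop, hbd⟩ := G_bounded hY_right hY_left hf M
    have habove : ∀ s, σ < s → υ s = ∞ := by
      intro s hs
      obtain ⟨e, heE, hes⟩ := (csInf_lt_iff hEbdd hEne).1 hs
      exact top_le_iff.1 (heE.2 ▸ hmono e s heE.1.1 hes.le)
    have hae : ∀ᵐ s ∂(volume.restrict (Ioc (0:ℝ) t)), G Y f ((υ s).toReal) ≤ cb := by
      have h1 : ∀ᵐ s ∂(volume.restrict (Ioc (0:ℝ) t)), s ≠ σ := by
        refine ae_iff.2 ?_
        have hset2 : {s : ℝ | ¬ s ≠ σ} = {σ} := by ext u; simp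
        rw [hset2]
        exact le_antisymm ((Measure.restrict_apply_le _ _).trans_eq Real.volume_singleton)
          (zero_le)
      filter_upwards [h1, ae_restrict_mem measurableSet_Ioc] with s hsσ hs
      rcases lt_or_gt_of_ne hsσ with h | h
      · refine hbd _ ENNReal.toReal_nonneg ?_
        calc (υ s).toReal ≤ (ENNReal.ofReal M).toReal :=
          ENNReal.toReal_mono ENNReal.ofReal_ne_top (hM s hs.1.le h)
        _ = M := ENNReal.toReal_ofReal hM0
      · rw [habove s h]
        simpa using hbd 0 le_rfl hM0
    have hfinint : (∫⁻ s in Set.Ioc (0:ℝ) t, G Y f ((υ s).toReal)) ≠ ∞ := by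
      have h2 : (∫⁻ s in Set.Ioc (0:ℝ) t, G Y f ((υ s).toReal)) ≤ cb * ENNReal.ofReal t := by
        calc (∫⁻ s in Set.Ioc (0:ℝ) t, G Y f ((υ s).toReal))
            ≤ ∫⁻ _ in Set.Ioc (0:ℝ) t, cb := lintegral_mono_ae hae
        _ = cb * ENNReal.ofReal t := by rw [setLIntegral_const, Real.volume_Ioc, sub_zero]
      intro h
      rw [h] at h2
      exact absurd (lt_of_le_of_lt h2 (ENNReal.mul_lt_top hcbtop.lt_top ENNReal.ofReal_lt_top))
        (lt_irrefl _)
    have h3 := heqn t ht hfinint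
    rw [htop] at h3
    exact hfinint h3.symm
  · push_neg at hbdd
    refine ENNReal.eq_top_of_forall_nnreal_le fun r => ?_
    obtain ⟨s, hs0, hsσ, hsr⟩ := hbdd r r.coe_nonneg
    have hsne := hfinbelow s hs0 hsσ
    have hst : s ≤ t := le_trans hsσ.le hσt
    have hval := sol_eq_tau hY_right hY_left hf hf0 ht0 ht1 heq hmono heqn hs0 hsne
    calc (r : ℝ≥0∞) ≤ υ s := by
          rw [← ENNReal.ofReal_coe_nnreal]; exact hsr.le
    _ = tau Y f t0 s := hval
    _ ≤ tau Y f t0 t := tau_mono hst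

end Uniqueness

end TimeChangeAux


theorem time_change_lemma
    (Y : ℝ → ℝ) (f : ℝ → ℝ)
    -- `Y` is a càdlàg trajectory:
    (hY_right : ∀ t : ℝ, Tendsto Y (nhdsWithin t (Set.Ici t)) (nhds (Y t)))
    (hY_left : ∀ t : ℝ, ∃ l : ℝ, Tendsto Y (nhdsWithin t (Set.Iio t)) (nhds l))
    (hf : Continuous f) (hf0 : ∀ x, 0 ≤ f x)
    -- `t0 = inf{t ≥ 0 : f(Y_t) = 0}`, with the convention `inf ∅ = ∞`:
    (t0 : ℝ≥0∞)
    (ht0 : t0 = ⨅ t : {t : ℝ // 0 ≤ t ∧ f (Y t) = 0}, ENNReal.ofReal t.1)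
    -- `t1 = inf{t ≥ 0 : ∫_0^t f(Y_u)⁻¹ du = ∞}`:
    (t1 : ℝ≥0∞)
    (ht1 : t1 = ⨅ t : {t : ℝ // 0 ≤ t ∧
        (∫⁻ u in Set.Ioc (0:ℝ) t, (ENNReal.ofReal (f (Y u)))⁻¹) = ∞},
        ENNReal.ofReal t.1)
    (heq : t0 = t1) :
    -- the explicit candidate `υ_t = inf{s ≥ 0 : ∫_0^s f(Y_u)⁻¹ du > t} ∧ t0`
    -- is the unique solution of the integral equation:
    IsTimeChangeSolution Y f (fun t =>
      min (⨅ s : {s : ℝ // 0 ≤ s ∧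
          ENNReal.ofReal t < ∫⁻ u in Set.Ioc (0:ℝ) s, (ENNReal.ofReal (f (Y u)))⁻¹},
          ENNReal.ofReal s.1) t0) ∧
    ∀ υ : ℝ → ℝ≥0∞, IsTimeChangeSolution Y f υ → ∀ t : ℝ, 0 ≤ t →
      υ t = min (⨅ s : {s : ℝ // 0 ≤ s ∧
          ENNReal.ofReal t < ∫⁻ u in Set.Ioc (0:ℝ) s, (ENNReal.ofReal (f (Y u)))⁻¹},
          ENNReal.ofReal s.1) t0 := by
  have ht1' : t1 = ⨅ t : {t : ℝ // 0 ≤ t ∧ TimeChangeAux.A Y f t = ∞},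
      ENNReal.ofReal t.1 := ht1
  constructor
  · constructor
    · intro s t hs hst
      exact TimeChangeAux.tau_mono hst
    · intro t ht hRHS
      show TimeChangeAux.tau Y f t0 t
          = ∫⁻ s in Set.Ioc (0:ℝ) t, TimeChangeAux.G Y f ((TimeChangeAux.tau Y f t0 s).toReal)
      rcases eq_or_ne (TimeChangeAux.tau Y f t0 t) ∞ with htop | hne
      · exact absurd
          (TimeChangeAux.lintegral_eq_top_of_tau_top hY_right hf hf0 ht0 ht1' heq ht htop) hRHS
      · exact TimeChangeAux.tau_eq_lintegral hY_right hf hf0 ht0 ht1' heq ht hne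
  · intro υ hsol t ht
    exact TimeChangeAux.sol_eq_tau_all hY_right hY_left hf hf0 ht0 ht1' heq
      hsol.1 hsol.2 ht
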